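/- Let α, β, m be natural numbers with β ≤ m, and let u, v, w, z be α×α complex matrices such that the 2α×2α block matrix fromBlocks u v w z is unitary. Let I be the index type (Fin α ⊕ Fin m) ⊕ (Fin m ⊕ Fin α) and let U be the I×I complex matrix given in 4×4 block form with respect to the partition of sizes (α, m, m, α) by [[u, 0, 0, v], [0, 0, 1_m, 0], [0, 1_m, 0, 0], [w, 0, 0, z]]. Let A and B be Hermitian (α+β)×(α+β) complex matrices (indexed by Fin α ⊕ Fin β), let ι : Fin α ⊕ Fin β → I be the embedding sending the Fin α part to the first group of the partition and the Fin β part to the first β coordinates of the second group (via β ≤ m), and let Ã, B̃ be the I×I matrices with Ã(ι i, ι j) = A(i, j), B̃(ι i, ι j) = B(i, j), and all other entries zero. Let S be the (α+β)×(α+β) matrix fromBlocks u 0 0 0. Then for every complex number c: det(1 - c·(Ã + U·B̃·Uᴴ)) = det(1 - c·(fromBlocks A 0 0 B)·(fromBlocks 1 S Sᴴ 1)), where the right-hand side matrices are indexed by (Fin α ⊕ Fin β) ⊕ (Fin α ⊕ Fin β). -/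

import Mathlib

open Matrix

/-- The big `(α + m + m + α) × (α + m + m + α)` block matrix
`[[u, 0, 0, v], [0, 0, 1, 0], [0, 1, 0, 0], [w, 0, 0, z]]`. -/
noncomputable def bigU (α m : ℕ) (u v w z : Matrix (Fin α) (Fin α) ℂ) :
    Matrix ((Fin α ⊕ Fin m) ⊕ (Fin m ⊕ Fin α)) ((Fin α ⊕ Fin m) ⊕ (Fin m ⊕ Fin α)) ℂ :=
  Matrix.fromBlocks
    (Matrix.fromBlocks u 0 0 0)
    (Matrix.fromBlocks 0 v (1 : Matrix (Fin m) (Fin m) ℂ) 0)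
    (Matrix.fromBlocks 0 (1 : Matrix (Fin m) (Fin m) ℂ) w 0)
    (Matrix.fromBlocks 0 0 0 z)

/-- The embedding of indices `Fin α ⊕ Fin β` into `(Fin α ⊕ Fin m) ⊕ (Fin m ⊕ Fin α)`,
sending the `Fin α` part to the first group and the `Fin β` part to the first `β`
coordinates of the second group. -/
def emb (α β m : ℕ) (hβ : β ≤ m) :
    Fin α ⊕ Fin β → (Fin α ⊕ Fin m) ⊕ (Fin m ⊕ Fin α) :=
  Sum.elim (fun i => Sum.inl (Sum.inl i)) (fun j => Sum.inr (Sum.inl (Fin.castLE hβ j)))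

lemma emb_inj (α β m : ℕ) (hβ : β ≤ m) : Function.Injective (emb α β m hβ) := by
  intro x y h
  rcases x with x | x <;> rcases y with y | y <;>
    simp only [emb, Sum.elim_inl, Sum.elim_inr, Sum.inl.injEq, Sum.inr.injEq,
      reduceCtorEq] at h
  · exact congrArg Sum.inl h
  · exact congrArg Sum.inr (Fin.castLE_injective hβ h)

/-- `det(1 - c·(Ã + U·B̃·Uᴴ)) = det(1 - c·(A ⊕ B)·[[1, S], [S*, 1]])`. -/
theorem det_one_sub_smul_conj_eq (α β m : ℕ) (hβ : β ≤ m)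
    (u v w z : Matrix (Fin α) (Fin α) ℂ)
    (huvwz : Matrix.fromBlocks u v w z ∈ Matrix.unitaryGroup (Fin α ⊕ Fin α) ℂ)
    (A B : Matrix (Fin α ⊕ Fin β) (Fin α ⊕ Fin β) ℂ)
    (hA : A.IsHermitian) (hB : B.IsHermitian)
    (Atil Btil : Matrix ((Fin α ⊕ Fin m) ⊕ (Fin m ⊕ Fin α))
      ((Fin α ⊕ Fin m) ⊕ (Fin m ⊕ Fin α)) ℂ)
    (hAtil : ∀ i j, Atil (emb α β m hβ i) (emb α β m hβ j) = A i j)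
    (hAtil0 : ∀ p q, (p ∉ Set.range (emb α β m hβ) ∨ q ∉ Set.range (emb α β m hβ)) →
      Atil p q = 0)
    (hBtil : ∀ i j, Btil (emb α β m hβ i) (emb α β m hβ j) = B i j)
    (hBtil0 : ∀ p q, (p ∉ Set.range (emb α β m hβ) ∨ q ∉ Set.range (emb α β m hβ)) →
      Btil p q = 0)
    (S : Matrix (Fin α ⊕ Fin β) (Fin α ⊕ Fin β) ℂ)
    (hS : S = Matrix.fromBlocks u 0 0 0)
    (c : ℂ) :
    (1 - c • (Atil + bigU α m u v w z * Btil * (bigU α m u v w z)ᴴ)).det =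
      (1 - c • (Matrix.fromBlocks A 0 0 B * Matrix.fromBlocks 1 S Sᴴ 1)).det := by

  classical
  set ι := emb α β m hβ with hιdef
  have hinj : Function.Injective ι := emb_inj α β m hβ
  set U := bigU α m u v w z with hUdef
  -- the "inclusion" matrix
  set Q : Matrix (Fin α ⊕ Fin β) ((Fin α ⊕ Fin m) ⊕ (Fin m ⊕ Fin α)) ℂ :=
    Matrix.of (fun i p => if ι i = p then 1 else 0) with hQdef
  have hQmul : ∀ (X : Matrix ((Fin α ⊕ Fin m) ⊕ (Fin m ⊕ Fin α))
      ((Fin α ⊕ Fin m) ⊕ (Fin m ⊕ Fin α)) ℂ), Q * X = X.submatrix ι id := by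
    intro X
    ext i q
    rw [Matrix.mul_apply]
    simp only [hQdef, Matrix.of_apply, ite_mul, one_mul, zero_mul]
    rw [Finset.sum_ite_eq]
    simp [Matrix.submatrix_apply]
  have hmulQ : ∀ (X : Matrix (Fin α ⊕ Fin β)
      ((Fin α ⊕ Fin m) ⊕ (Fin m ⊕ Fin α)) ℂ), X * Qᴴ = X.submatrix id ι := by
    intro X
    ext q i
    rw [Matrix.mul_apply]
    simp only [hQdef, Matrix.conjTranspose_apply, Matrix.of_apply,
      apply_ite (star : ℂ → ℂ), star_one, star_zero, mul_ite, mul_one, mul_zero]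
    rw [Finset.sum_ite_eq]
    simp [Matrix.submatrix_apply]
  have hQQ : Q * Qᴴ = 1 := by
    ext i j
    rw [Matrix.mul_apply]
    simp only [hQdef, Matrix.conjTranspose_apply, Matrix.of_apply,
      apply_ite (star : ℂ → ℂ), star_one, star_zero, ite_mul, one_mul, zero_mul]
    rw [Finset.sum_ite_eq]
    simp only [Finset.mem_univ, if_true]
    by_cases h : ι j = ι i
    · rw [if_pos h, hinj h, Matrix.one_apply_eq]
    · rw [if_neg h, Matrix.one_apply_ne (fun hc => h (by rw [hc]))]
  -- conjugation by Q picks out the embedded block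
  have hmid : ∀ (M : Matrix (Fin α ⊕ Fin β) (Fin α ⊕ Fin β) ℂ)
      (Mtil : Matrix ((Fin α ⊕ Fin m) ⊕ (Fin m ⊕ Fin α)) ((Fin α ⊕ Fin m) ⊕ (Fin m ⊕ Fin α)) ℂ),
      (∀ i j, Mtil (ι i) (ι j) = M i j) →
      (∀ p q, (p ∉ Set.range ι ∨ q ∉ Set.range ι) → Mtil p q = 0) →
      Mtil = Qᴴ * M * Q := by
    intro M Mtil h1 h0
    have hentry : ∀ p q, (Qᴴ * M * Q) p q =
        ∑ i, ∑ j, (if ι i = p then 1 else 0) * (M i j * (if ι j = q then 1 else 0)) := by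
      intro p q
      rw [Matrix.mul_apply]
      simp only [Matrix.mul_apply, Finset.sum_mul]
      rw [Finset.sum_comm]
      simp only [hQdef, Matrix.conjTranspose_apply, Matrix.of_apply,
        apply_ite (star : ℂ → ℂ), star_one, star_zero, mul_assoc]
    ext p q
    rw [hentry]
    by_cases hp : p ∈ Set.range ι
    · obtain ⟨i, rfl⟩ := hp
      by_cases hq : q ∈ Set.range ι
      · obtain ⟨j, rfl⟩ := hq
        rw [h1]
        rw [Finset.sum_eq_single i]
        · rw [Finset.sum_eq_single j]
          · rw [if_pos rfl, if_pos rfl, one_mul, mul_one]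
          · intro b _ hb
            rw [if_neg (fun hc => hb (hinj hc)), mul_zero, mul_zero]
          · intro hfalse; exact absurd (Finset.mem_univ j) hfalse
        · intro b _ hb
          refine Finset.sum_eq_zero fun b' _ => ?_
          rw [if_neg (fun hc => hb (hinj hc)), zero_mul]
        · intro hfalse; exact absurd (Finset.mem_univ i) hfalse
      · rw [h0 _ _ (Or.inr hq)]
        refine (Finset.sum_eq_zero fun a _ => Finset.sum_eq_zero fun b _ => ?_).symm
        rw [if_neg (fun hc => hq ⟨b, hc⟩), mul_zero, mul_zero]
    · rw [h0 _ _ (Or.inl hp)]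
      refine (Finset.sum_eq_zero fun a _ => ?_).symm
      rw [if_neg (fun hc => hp ⟨a, hc⟩)]
      simp
  have hAeq : Atil = Qᴴ * A * Q := hmid A Atil hAtil hAtil0
  have hBeq : Btil = Qᴴ * B * Q := hmid B Btil hBtil hBtil0
  -- S is the compression of U
  have hQUQ : Q * U * Qᴴ = S := by
    rw [hQmul, hmulQ]
    subst hS
    ext i j
    rcases i with i | i <;> rcases j with j | j <;>
      simp [hUdef, bigU, hιdef, emb, Matrix.submatrix_apply, Matrix.fromBlocks]
  -- bigU is unitary
  have huu : (Matrix.fromBlocks u v w z)ᴴ * Matrix.fromBlocks u v w z = 1 := by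
    have := Matrix.mem_unitaryGroup_iff'.mp huvwz
    rwa [Matrix.star_eq_conjTranspose] at this
  rw [Matrix.fromBlocks_conjTranspose, Matrix.fromBlocks_multiply] at huu
  replace huu := huu.trans Matrix.fromBlocks_one.symm
  have e11 : uᴴ * u + wᴴ * w = 1 := by
    have := congrArg Matrix.toBlocks₁₁ huu; simpa only [Matrix.toBlocks_fromBlocks₁₁] using this
  have e12 : uᴴ * v + wᴴ * z = 0 := by
    have := congrArg Matrix.toBlocks₁₂ huu; simpa only [Matrix.toBlocks_fromBlocks₁₂] using this
  have e21 : vᴴ * u + zᴴ * w = 0 := by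
    have := congrArg Matrix.toBlocks₂₁ huu; simpa only [Matrix.toBlocks_fromBlocks₂₁] using this
  have e22 : vᴴ * v + zᴴ * z = 1 := by
    have := congrArg Matrix.toBlocks₂₂ huu; simpa only [Matrix.toBlocks_fromBlocks₂₂] using this
  have hUU : Uᴴ * U = 1 := by
    show (bigU α m u v w z)ᴴ * bigU α m u v w z = 1
    simp only [bigU, Matrix.fromBlocks_conjTranspose, Matrix.conjTranspose_zero,
      Matrix.conjTranspose_one, Matrix.fromBlocks_multiply, Matrix.fromBlocks_add,
      Matrix.mul_zero, Matrix.zero_mul, Matrix.mul_one, Matrix.one_mul, add_zero, zero_add,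
      e11, e12, e21, e22, Matrix.fromBlocks_zero, Matrix.fromBlocks_one]
  -- assemble
  set T : Matrix ((Fin α ⊕ Fin m) ⊕ (Fin m ⊕ Fin α)) ((Fin α ⊕ Fin β) ⊕ (Fin α ⊕ Fin β)) ℂ :=
    Matrix.fromCols Qᴴ (U * Qᴴ) with hTdef
  have hTH : Tᴴ = Matrix.fromRows Q (Q * Uᴴ) := by
    rw [hTdef, Matrix.conjTranspose_fromCols_eq_fromRows_conjTranspose,
      Matrix.conjTranspose_mul, Matrix.conjTranspose_conjTranspose]
  have hTDT : T * Matrix.fromBlocks A 0 0 B * Tᴴ = Atil + U * Btil * Uᴴ := by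
    rw [hTH, hTdef, Matrix.fromCols_mul_fromBlocks, Matrix.fromCols_mul_fromRows,
      hAeq, hBeq]
    simp only [Matrix.mul_zero, Matrix.zero_mul, add_zero, zero_add, Matrix.mul_assoc]
  have hTT : Tᴴ * T = Matrix.fromBlocks 1 S Sᴴ 1 := by
    rw [hTH, hTdef, Matrix.fromRows_mul_fromCols]
    have h12 : Q * (U * Qᴴ) = S := by rw [← Matrix.mul_assoc, hQUQ]
    have h21 : Q * Uᴴ * Qᴴ = Sᴴ := by
      rw [← hQUQ, Matrix.conjTranspose_mul, Matrix.conjTranspose_mul,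
        Matrix.conjTranspose_conjTranspose, Matrix.mul_assoc]
    have h22 : Q * Uᴴ * (U * Qᴴ) = 1 := by
      rw [Matrix.mul_assoc Q Uᴴ, ← Matrix.mul_assoc Uᴴ U, hUU, Matrix.one_mul, hQQ]
    rw [hQQ, h12, h21, h22]
  calc (1 - c • (Atil + U * Btil * Uᴴ)).det
      = (1 - T * (c • (Matrix.fromBlocks A 0 0 B * Tᴴ))).det := by
        rw [← hTDT, Matrix.mul_smul, Matrix.mul_assoc]
    _ = (1 - c • (Matrix.fromBlocks A 0 0 B * Tᴴ) * T).det := Matrix.det_one_sub_mul_comm _ _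
    _ = (1 - c • (Matrix.fromBlocks A 0 0 B * Matrix.fromBlocks 1 S Sᴴ 1)).det := by
        rw [Matrix.smul_mul, Matrix.mul_assoc, hTT]
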